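/- In the multi-unit model, there exists a constant M1, depending only on k and the parameters (v, p, d) (and in particular independent of B and N), such that for every capacity B ∈ ℕ and every arrival count vector N ∈ ℕ^k, OPT_d(N) − IND_d(N) ≤ M1, where OPT_d(N) is the maximum of f_d over all x ∈ ℕ^k with x ≤ N (past counts 0), and IND_d(N) is the maximum of f_d over all index solutions x ∈ ℕ^k with x ≤ N (past counts 0). -/

import Mathlib

open Finset

/-- PMF of a Binomial(m, p) random variable at value `s`. -/
noncomputable def binomPMF (p : ℝ) (m s : ℕ) : ℝ :=
  (m.choose s : ℝ) * p ^ s * (1 - p) ^ (m - s)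

/-- Expectation of `g` applied to a vector of independent binomial random variables,
where coordinate `j` is Binomial(x j, p j). -/
noncomputable def jointExp {k : ℕ} (p : Fin k → ℝ) (x : Fin k → ℕ)
    (g : (Fin k → ℕ) → ℝ) : ℝ :=
  ∑ a ∈ Fintype.piFinset (fun j => Finset.range (x j + 1)),
    (∏ j, binomPMF (p j) (x j) (a j)) * g a

open Classical in
/-- Probability of the event `E` for a vector of independent binomial random
variables, coordinate `j` being Binomial(x j, p j). -/
noncomputable def jointProb {k : ℕ} (p : Fin k → ℝ) (x : Fin k → ℕ)
    (E : (Fin k → ℕ) → Prop) : ℝ :=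
  jointExp p x (fun a => if E a then 1 else 0)

/-- P[S(x) ≥ B], where S(x) = Σ_j X_{j, x_j} is Poisson binomial. -/
noncomputable def showTail {k : ℕ} (p : Fin k → ℝ) (x : Fin k → ℕ) (B : ℕ) : ℝ :=
  jointProb p x (fun a => B ≤ ∑ j, a j)

/-- Expected compensation V_B(x) = E[(S(x) − B)^+]. -/
noncomputable def VB {k : ℕ} (p : Fin k → ℝ) (B : ℕ) (x : Fin k → ℕ) : ℝ :=
  jointExp p x (fun a => max ((∑ j, a j : ℝ) - B) 0)

/-- Objective of the offline problem with past accepted counts `y`: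
f(x) = Σ_j v_j (y_j + x_j) − V_B(y + x). -/
noncomputable def objFn {k : ℕ} (v p : Fin k → ℝ) (B : ℕ) (y x : Fin k → ℕ) : ℝ :=
  ∑ j, v j * ((y j : ℝ) + (x j : ℝ)) - VB p B (fun j => y j + x j)

/-- Feasibility for the offline problem with demand bounds `n`. -/
def Feasible {k : ℕ} (n x : Fin k → ℕ) : Prop := ∀ j, x j ≤ n j

/-- `x` is locally optimal at `j`: `x j` is the largest element of the argmax,
over `z ∈ {0,…,n j}`, of `z · v_j − V_B(y + x + (z − x_j)·e_j)`. -/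
def LocallyOpt {k : ℕ} (v p : Fin k → ℝ) (B : ℕ) (n y : Fin k → ℕ)
    (x : Fin k → ℕ) (j : Fin k) : Prop :=
  ∀ z ≤ n j,
    ((z : ℝ) * v j - VB p B (fun i => y i + Function.update x j z i)
        ≤ (x j : ℝ) * v j - VB p B (fun i => y i + x i)) ∧
    (x j < z →
      (z : ℝ) * v j - VB p B (fun i => y i + Function.update x j z i)
        < (x j : ℝ) * v j - VB p B (fun i => y i + x i))

/-- `t` witnesses that `x` is an index solution for bounds `n`:
all bounds exhausted below `t`, nothing accepted above `t`. -/
def IndexWitness {k : ℕ} (n x : Fin k → ℕ) (t : Fin k) : Prop :=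
  (∀ j, j < t → x j = n j) ∧ (∀ j, t < j → x j = 0)

/-- `x` is an index solution for bounds `n`. -/
def IsIndexSol {k : ℕ} (n x : Fin k → ℕ) : Prop := ∃ t, IndexWitness n x t

/-- `t` is the (smallest possible) threshold index of the index solution `x`. -/
def ThresholdIndex {k : ℕ} (n x : Fin k → ℕ) (t : Fin k) : Prop :=
  IndexWitness n x t ∧ ∀ t' : Fin k, t' < t → ¬ IndexWitness n x t'

/-- Optimal value of the offline problem with past counts `y` and bounds `n`. -/
noncomputable def OptVal {k : ℕ} (v p : Fin k → ℝ) (B : ℕ) (y n : Fin k → ℕ) : ℝ :=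
  sSup {r : ℝ | ∃ x, Feasible n x ∧ r = objFn v p B y x}

/-- Optimal value of the offline problem restricted to index solutions. -/
noncomputable def IndOptVal {k : ℕ} (v p : Fin k → ℝ) (B : ℕ) (y n : Fin k → ℕ) : ℝ :=
  sSup {r : ℝ | ∃ x, Feasible n x ∧ IsIndexSol n x ∧ r = objFn v p B y x}

/-- Multi-unit expected compensation `V^d_B(x) = E[(S_d(x) − B)^+]`, where
`S_d(x) = Σ_j d_j · X_{j,x_j}`. -/
noncomputable def VdB {k : ℕ} (p : Fin k → ℝ) (d : Fin k → ℕ) (B : ℕ)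
    (x : Fin k → ℕ) : ℝ :=
  jointExp p x (fun a => max ((∑ j, (d j : ℝ) * (a j : ℝ)) - (B : ℝ)) 0)

/-- Multi-unit offline objective with past counts `y`:
`f_d(x) = Σ_j v_j (y_j + x_j) − V^d_B(y + x)`. -/
noncomputable def objFnD {k : ℕ} (v p : Fin k → ℝ) (d : Fin k → ℕ) (B : ℕ)
    (y x : Fin k → ℕ) : ℝ :=
  ∑ j, v j * ((y j : ℝ) + (x j : ℝ)) - VdB p d B (fun j => y j + x j)

/-- `P[S_d(x) ≥ b]` for an integer threshold `b`. -/
noncomputable def showTailD {k : ℕ} (p : Fin k → ℝ) (d : Fin k → ℕ)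
    (x : Fin k → ℕ) (b : ℤ) : ℝ :=
  jointProb p x (fun a => b ≤ ∑ j, (d j : ℤ) * (a j : ℤ))

/-- Multi-unit local optimality at `i`: `x i` is the largest element of the
argmax, over `z ∈ {0,…,n i}`, of `z · v_i − V^d_B(y + x + (z − x_i)·e_i)`. -/
def LocallyOptD {k : ℕ} (v p : Fin k → ℝ) (d : Fin k → ℕ) (B : ℕ)
    (n y : Fin k → ℕ) (x : Fin k → ℕ) (i : Fin k) : Prop :=
  ∀ z ≤ n i,
    ((z : ℝ) * v i - VdB p d B (fun m => y m + Function.update x i z m)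
        ≤ (x i : ℝ) * v i - VdB p d B (fun m => y m + x m)) ∧
    (x i < z →
      (z : ℝ) * v i - VdB p d B (fun m => y m + Function.update x i z m)
        < (x i : ℝ) * v i - VdB p d B (fun m => y m + x m))

/-- Optimal value of the multi-unit offline problem with past counts `y`,
bounds `n`. -/
noncomputable def OptValD {k : ℕ} (v p : Fin k → ℝ) (d : Fin k → ℕ) (B : ℕ)
    (y n : Fin k → ℕ) : ℝ :=
  sSup {r : ℝ | ∃ x, Feasible n x ∧ r = objFnD v p d B y x}

/-- Optimal value of the multi-unit offline problem restricted to index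
solutions. -/
noncomputable def IndOptValD {k : ℕ} (v p : Fin k → ℝ) (d : Fin k → ℕ) (B : ℕ)
    (y n : Fin k → ℕ) : ℝ :=
  sSup {r : ℝ | ∃ x, Feasible n x ∧ IsIndexSol n x ∧ r = objFnD v p d B y x}

set_option maxHeartbeats 1600000

namespace ILB

section
theorem binomPMF_nonneg {p : ℝ} (h0 : 0 ≤ p) (h1 : p ≤ 1) (m s : ℕ) :
    0 ≤ binomPMF p m s := by
  unfold binomPMF
  have : (0:ℝ) ≤ 1 - p := by linarith
  positivity

@[simp] theorem binomPMF_zero_zero (p : ℝ) : binomPMF p 0 0 = 1 := by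
  simp [binomPMF]

theorem binomPMF_succ_zero (p : ℝ) (m : ℕ) :
    binomPMF p (m+1) 0 = (1-p) * binomPMF p m 0 := by
  simp [binomPMF, pow_succ]; ring

theorem binomPMF_succ_succ (p : ℝ) (m s : ℕ) :
    binomPMF p (m+1) (s+1) = (1-p) * binomPMF p m (s+1) + p * binomPMF p m s := by
  rcases le_or_gt (s+1) m with h | h
  · unfold binomPMF
    rw [Nat.choose_succ_succ, Nat.succ_sub_succ]
    have h2 : m - (s+1) + 1 = m - s := by omega
    push_cast
    rw [← h2, pow_succ]
    ring
  · rcases eq_or_lt_of_le (Nat.succ_le_of_lt h) with h' | h'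
    ·
      have hm : m = s := by omega
      subst hm
      unfold binomPMF
      simp [Nat.choose_succ_self, Nat.choose_self, Nat.succ_sub_succ]
      ring
    · have h1 : m.choose (s+1) = 0 := Nat.choose_eq_zero_of_lt (by omega)
      have h2 : m.choose s = 0 := Nat.choose_eq_zero_of_lt (by omega)
      have h3 : (m+1).choose (s+1) = 0 := Nat.choose_eq_zero_of_lt (by omega)
      simp [binomPMF, h1, h2, h3]

/-- the master 1-D recursion -/
theorem sum_step (p : ℝ) (m : ℕ) (h : ℕ → ℝ) :
    ∑ s ∈ range (m+2), binomPMF p (m+1) s * h s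
      = (1-p) * ∑ s ∈ range (m+1), binomPMF p m s * h s
        + p * ∑ s ∈ range (m+1), binomPMF p m s * h (s+1) := by
  rw [Finset.sum_range_succ' (fun s => binomPMF p (m+1) s * h s) (m+1)]
  have e1 : ∀ s, binomPMF p (m+1) (s+1) * h (s+1)
      = (1-p) * (binomPMF p m (s+1) * h (s+1)) + p * (binomPMF p m s * h (s+1)) := by
    intro s; rw [binomPMF_succ_succ]; ring
  simp only [e1]
  rw [Finset.sum_add_distrib, ← Finset.mul_sum, ← Finset.mul_sum, binomPMF_succ_zero]
  have e2 : ∑ s ∈ range (m+1), binomPMF p m (s+1) * h (s+1)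
      = ∑ s ∈ range (m+2), binomPMF p m s * h s - binomPMF p m 0 * h 0 := by
    rw [Finset.sum_range_succ' (fun s => binomPMF p m s * h s) (m+1)]; ring
  have e3 : ∑ s ∈ range (m+2), binomPMF p m s * h s
      = ∑ s ∈ range (m+1), binomPMF p m s * h s := by
    rw [Finset.sum_range_succ]
    have : binomPMF p m (m+1) = 0 := by
      simp [binomPMF, Nat.choose_eq_zero_of_lt (Nat.lt_succ_self m)]
    simp [this]
  rw [e2, e3]; ring

theorem sum_pmf_one (p : ℝ) (m : ℕ) : ∑ s ∈ range (m+1), binomPMF p m s = 1 := by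
  induction m with
  | zero => simp
  | succ m ih =>
    have := sum_step p m (fun _ => 1)
    simp only [mul_one] at this
    rw [this, ih]; ring

theorem sum_pmf_mean (p : ℝ) (m : ℕ) :
    ∑ s ∈ range (m+1), binomPMF p m s * (s : ℝ) = m * p := by
  induction m with
  | zero => simp
  | succ m ih =>
    have := sum_step p m (fun s => (s:ℝ))
    rw [this, ih]
    have : ∑ s ∈ range (m+1), binomPMF p m s * ((s:ℝ)+1)
        = ∑ s ∈ range (m+1), (binomPMF p m s * (s:ℝ) + binomPMF p m s) := by
      apply Finset.sum_congr rfl; intro s _; ring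
    push_cast
    rw [this, Finset.sum_add_distrib, ih, sum_pmf_one]; ring

theorem sum_pmf_sq (p : ℝ) (m : ℕ) :
    ∑ s ∈ range (m+1), binomPMF p m s * (s : ℝ)^2 = m * p + m * (m-1) * p^2 := by
  induction m with
  | zero => simp
  | succ m ih =>
    have hstep := sum_step p m (fun s => (s:ℝ)^2)
    rw [hstep]
    have : ∑ s ∈ range (m+1), binomPMF p m s * ((s:ℝ)+1)^2
        = ∑ s ∈ range (m+1), (binomPMF p m s * (s:ℝ)^2 + 2 * (binomPMF p m s * (s:ℝ)) + binomPMF p m s) := by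
      apply Finset.sum_congr rfl; intro s _; push_cast; ring
    push_cast
    rw [this, Finset.sum_add_distrib, Finset.sum_add_distrib, ih, sum_pmf_one,
      ← Finset.mul_sum, sum_pmf_mean]
    ring

theorem sum_pmf_centered_sq (p : ℝ) (m : ℕ) :
    ∑ s ∈ range (m+1), binomPMF p m s * ((s : ℝ) - m*p)^2 = m * p * (1-p) := by
  have e : ∀ s : ℕ, binomPMF p m s * ((s : ℝ) - m*p)^2
      = binomPMF p m s * (s:ℝ)^2 - (2*m*p) * (binomPMF p m s * (s:ℝ))
        + (m*p)^2 * binomPMF p m s := by intro s; ring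
  simp only [e]
  rw [Finset.sum_add_distrib, Finset.sum_sub_distrib, ← Finset.mul_sum, ← Finset.mul_sum,
    sum_pmf_sq, sum_pmf_mean, sum_pmf_one]
  ring
end

section
variable {k : ℕ} (p : Fin k → ℝ) (x : Fin k → ℕ)

theorem jointExp_congr {g h : (Fin k → ℕ) → ℝ} (e : ∀ a, g a = h a) :
    jointExp p x g = jointExp p x h := by
  unfold jointExp; exact Finset.sum_congr rfl (fun a _ => by rw [e a])

theorem jointExp_add (g h : (Fin k → ℕ) → ℝ) :
    jointExp p x (fun a => g a + h a) = jointExp p x g + jointExp p x h := by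
  unfold jointExp; rw [← Finset.sum_add_distrib]
  exact Finset.sum_congr rfl (fun a _ => by ring)

theorem jointExp_sub (g h : (Fin k → ℕ) → ℝ) :
    jointExp p x (fun a => g a - h a) = jointExp p x g - jointExp p x h := by
  unfold jointExp; rw [← Finset.sum_sub_distrib]
  exact Finset.sum_congr rfl (fun a _ => by ring)

theorem jointExp_const_mul (c : ℝ) (g : (Fin k → ℕ) → ℝ) :
    jointExp p x (fun a => c * g a) = c * jointExp p x g := by
  unfold jointExp; rw [Finset.mul_sum]
  exact Finset.sum_congr rfl (fun a _ => by ring)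

theorem jointExp_sum {ι : Type*} (s : Finset ι) (g : ι → (Fin k → ℕ) → ℝ) :
    jointExp p x (fun a => ∑ i ∈ s, g i a) = ∑ i ∈ s, jointExp p x (g i) := by
  classical
  induction s using Finset.induction with
  | empty => simp [jointExp]
  | insert _ _ hni ih =>
    rw [Finset.sum_insert hni, ← ih, ← jointExp_add]
    apply jointExp_congr; intro a; rw [Finset.sum_insert hni]

/-- product-form factorization -/
theorem jointExp_prod (h : Fin k → ℕ → ℝ) :
    jointExp p x (fun a => ∏ j, h j (a j))
      = ∏ j, ∑ s ∈ range (x j + 1), binomPMF (p j) (x j) s * h j s := by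
  unfold jointExp
  rw [Finset.prod_univ_sum]
  apply Finset.sum_congr rfl
  intro a _
  rw [← Finset.prod_mul_distrib]

theorem jointExp_const (c : ℝ) : jointExp p x (fun _ => c) = c := by
  have h := jointExp_prod p x (fun _ _ => (1:ℝ))
  simp only [Finset.prod_const_one, mul_one] at h
  simp only [sum_pmf_one, Finset.prod_const_one] at h
  calc jointExp p x (fun _ => c) = jointExp p x (fun a => c * (1:ℝ)) := by
        apply jointExp_congr; intro a; ring
    _ = c * jointExp p x (fun _ => (1:ℝ)) := jointExp_const_mul p x c _
    _ = c := by rw [h]; ring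

variable (hp : ∀ j, 0 ≤ p j ∧ p j ≤ 1)
include hp

theorem jointExp_mono {g h : (Fin k → ℕ) → ℝ} (e : ∀ a, g a ≤ h a) :
    jointExp p x g ≤ jointExp p x h := by
  unfold jointExp
  apply Finset.sum_le_sum
  intro a _
  apply mul_le_mul_of_nonneg_left (e a)
  exact Finset.prod_nonneg fun j _ => binomPMF_nonneg (hp j).1 (hp j).2 _ _

theorem jointExp_nonneg {g : (Fin k → ℕ) → ℝ} (e : ∀ a, 0 ≤ g a) :
    0 ≤ jointExp p x g := by
  have := jointExp_mono p x hp (g := fun _ => 0) (h := g) e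
  rwa [jointExp_const] at this

theorem jointExp_abs_le_sqrt (g : (Fin k → ℕ) → ℝ) :
    jointExp p x (fun a => |g a|) ≤ Real.sqrt (jointExp p x (fun a => (g a)^2)) := by
  set E := jointExp p x (fun a => |g a|) with hE
  have hEnn : 0 ≤ E := jointExp_nonneg p x hp (fun a => abs_nonneg _)
  have hsq : 0 ≤ jointExp p x (fun a => (g a)^2) :=
    jointExp_nonneg p x hp (fun a => sq_nonneg _)
  rw [Real.le_sqrt hEnn hsq]
  have key : jointExp p x (fun a => (|g a| - E)^2)
      = jointExp p x (fun a => (g a)^2) - E^2 := by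
    have e1 : ∀ a : Fin k → ℕ, (|g a| - E)^2 = (g a)^2 - (2*E) * |g a| + E^2 := by
      intro a; rw [sub_sq]; rw [sq_abs]; ring
    rw [jointExp_congr p x e1, jointExp_add, jointExp_sub, jointExp_const_mul,
      jointExp_const]
    ring
  have : 0 ≤ jointExp p x (fun a => (|g a| - E)^2) :=
    jointExp_nonneg p x hp (fun a => sq_nonneg _)
  rw [key] at this; linarith
end

section
variable {k : ℕ} (p : Fin k → ℝ) (x : Fin k → ℕ)

theorem jointExp_marg (j : Fin k) (F : (Fin k → ℕ) → ℝ) :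
    jointExp p x F = ∑ s ∈ range (x j + 1), binomPMF (p j) (x j) s *
      jointExp p (Function.update x j 0) (fun a => F (Function.update a j s)) := by
  classical
  unfold jointExp
  simp only [Finset.mul_sum]
  rw [← Finset.sum_product' (s := range (x j + 1))
      (t := Fintype.piFinset (fun i => Finset.range (Function.update x j 0 i + 1)))]
  apply Finset.sum_nbij' (i := fun b => ((b j, Function.update b j 0) :
      ℕ × (Fin k → ℕ))) (j := fun q => Function.update q.2 j q.1)
  · intro b hb
    rw [Finset.mem_product]
    constructor
    · exact Fintype.mem_piFinset.mp hb j
    · rw [Fintype.mem_piFinset]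
      intro i
      by_cases hij : i = j
      · subst hij; simp
      · simp only [Function.update_of_ne hij]
        exact Fintype.mem_piFinset.mp hb i
  · intro q hq
    rw [Finset.mem_product] at hq
    rw [Fintype.mem_piFinset]
    intro i
    by_cases hij : i = j
    · subst hij; simpa using hq.1
    · simp only [Function.update_of_ne hij]
      have := Fintype.mem_piFinset.mp hq.2 i
      simpa [Function.update_of_ne hij] using this
  · intro b _
    simp [Function.update_idem, Function.update_eq_self]
  · intro q hq
    rw [Finset.mem_product] at hq
    have hq2 := Fintype.mem_piFinset.mp hq.2 j
    simp only [Function.update_self, Function.update_idem] at *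
    have : q.2 j = 0 := by simpa using hq2
    ext
    · simp
    · simp [← this, Function.update_eq_self]
  · intro b hb
    have hsplit : (∏ i, binomPMF (p i) (x i) (b i))
        = binomPMF (p j) (x j) (b j) *
          ∏ i, binomPMF (p i) (Function.update x j 0 i) (Function.update b j 0 i) := by
      rw [← Finset.mul_prod_erase univ _ (mem_univ j),
        ← Finset.mul_prod_erase univ
          (fun i => binomPMF (p i) (Function.update x j 0 i) (Function.update b j 0 i))
          (mem_univ j)]
      simp only [Function.update_self]
      have : binomPMF (p j) 0 0 = 1 := by simp [binomPMF]
      rw [this, one_mul]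
      congr 1
      apply Finset.prod_congr rfl
      intro i hi
      have hij : i ≠ j := (Finset.mem_erase.mp hi).1
      rw [Function.update_of_ne hij, Function.update_of_ne hij]
    rw [hsplit]
    have : Function.update (Function.update b j 0) j (b j) = b := by
      rw [Function.update_idem, Function.update_eq_self]
    rw [this]
    ring

theorem jointExp_step (j : Fin k) (F : (Fin k → ℕ) → ℝ) :
    jointExp p (Function.update x j (x j + 1)) F
      = (1 - p j) * jointExp p x F
        + p j * jointExp p x (fun a => F (Function.update a j (a j + 1))) := by
  classical
  have h1 := jointExp_marg p (Function.update x j (x j + 1)) j F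
  have h2 := jointExp_marg p x j F
  have h3 := jointExp_marg p x j (fun a => F (Function.update a j (a j + 1)))
  rw [Function.update_self, Function.update_idem] at h1
  rw [h1, h2, h3]
  have h4 : ∀ s : ℕ, jointExp p (Function.update x j 0)
      (fun a => F (Function.update (Function.update a j s) j
        (Function.update a j s j + 1)))
      = jointExp p (Function.update x j 0) (fun a => F (Function.update a j (s+1))) := by
    intro s
    apply jointExp_congr
    intro a
    simp [Function.update_idem]
  simp only [h4]
  exact sum_step (p j) (x j)
    (fun s => jointExp p (Function.update x j 0) (fun a => F (Function.update a j s)))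

theorem jointExp_zero (F : (Fin k → ℕ) → ℝ) :
    jointExp p (fun _ => 0) F = F (fun _ => 0) := by
  classical
  unfold jointExp
  have hset : Fintype.piFinset (fun _ : Fin k => Finset.range (0 + 1))
      = {fun _ => 0} := by
    apply Finset.ext
    intro a
    simp only [Fintype.mem_piFinset, Finset.mem_range, Finset.mem_singleton]
    constructor
    · intro h; funext i; have := h i; omega
    · intro h; subst h; intro i; simp
  rw [hset, Finset.sum_singleton]
  simp [binomPMF]

theorem jointExp_split (r : Fin k → ℕ) (F : (Fin k → ℕ) → ℝ) :
    jointExp p (fun i => x i + r i) F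
      = jointExp p x (fun u => jointExp p r (fun b => F (fun i => u i + b i))) := by
  classical
  suffices H : ∀ (n : ℕ) (r : Fin k → ℕ) (F : (Fin k → ℕ) → ℝ), (∑ i, r i) = n →
      jointExp p (fun i => x i + r i) F
        = jointExp p x (fun u => jointExp p r (fun b => F (fun i => u i + b i))) by
    exact H _ r F rfl
  intro n
  induction n using Nat.strong_induction_on with
  | _ n ih =>
  intro r F hn
  rcases Nat.eq_zero_or_pos n with h0 | hpos
  · subst h0
    have hr : r = fun _ => 0 := by
      funext i
      have := Finset.sum_eq_zero_iff.mp hn i (mem_univ i)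
      exact this
    subst hr
    simp only [jointExp_zero]
    rfl
  · -- pick j with r j > 0
    have hex : ∃ j, 0 < r j := by
      by_contra hc
      push_neg at hc
      have : ∑ i, r i = 0 := Finset.sum_eq_zero (fun i _ => by have := hc i; omega)
      omega
    obtain ⟨j, hj⟩ := hex
    set r' : Fin k → ℕ := Function.update r j (r j - 1) with hr'
    have hrr : r = Function.update r' j (r' j + 1) := by
      funext i
      by_cases hij : i = j
      · subst hij; simp [hr']; omega
      · simp [hr', Function.update_of_ne hij]
    have hsum' : ∑ i, r' i = n - 1 := by
      rw [hr', Finset.sum_update_of_mem (mem_univ j)]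
      have h2 := Finset.sum_eq_sum_sdiff_singleton_add (mem_univ j) r
      rw [h2] at hn
      omega
    have hx : (fun i => x i + r i)
        = Function.update (fun i => x i + r' i) j ((x j + r' j) + 1) := by
      funext i
      by_cases hij : i = j
      · subst hij; simp [hr']; omega
      · simp [hr', Function.update_of_ne hij]
    rw [hx, jointExp_step]
    have ih1 := ih (n-1) (by omega) r' F hsum'
    have ih2 := ih (n-1) (by omega) r'
      (fun a => F (Function.update a j (a j + 1))) hsum'
    rw [ih1, ih2]
    rw [← jointExp_const_mul, ← jointExp_const_mul, ← jointExp_add]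
    apply jointExp_congr
    intro u
    have hstep := jointExp_step p r' j (fun b => F (fun i => u i + b i))
    rw [← hrr] at hstep
    rw [hstep]
    congr 1
    congr 1
    apply jointExp_congr
    intro b
    show F _ = F _
    congr 1
    funext i
    by_cases hij : i = j
    · subst hij; simp; omega
    · simp [Function.update_of_ne hij]
end

section
variable {k : ℕ} (p : Fin k → ℝ) (r : Fin k → ℕ)

theorem sum_pmf_centered (p : ℝ) (m : ℕ) :
    ∑ s ∈ range (m+1), binomPMF p m s * ((s : ℝ) - m*p) = 0 := by
  have e : ∀ s : ℕ, binomPMF p m s * ((s:ℝ) - m*p)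
      = binomPMF p m s * (s:ℝ) - (m*p) * binomPMF p m s := by intro s; ring
  simp only [e]
  rw [Finset.sum_sub_distrib, ← Finset.mul_sum, sum_pmf_mean, sum_pmf_one]
  ring

theorem jointExp_single (h0 : ℕ → ℝ) (j : Fin k) :
    jointExp p r (fun b => h0 (b j))
      = ∑ s ∈ range (r j + 1), binomPMF (p j) (r j) s * h0 s := by
  classical
  have hh := jointExp_prod p r (fun i s => if i = j then h0 s else 1)
  have e1 : ∀ b : Fin k → ℕ,
      (∏ i, if i = j then h0 (b i) else 1) = h0 (b j) := by
    intro b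
    rw [Finset.prod_ite_eq' univ j (fun i => h0 (b i))]
    simp
  have e2 : (∏ i, ∑ s ∈ range (r i + 1), binomPMF (p i) (r i) s *
      (if i = j then h0 s else 1))
      = ∑ s ∈ range (r j + 1), binomPMF (p j) (r j) s * h0 s := by
    have e3 : ∀ i : Fin k, (∑ s ∈ range (r i + 1), binomPMF (p i) (r i) s *
        (if i = j then h0 s else 1))
        = if i = j then (∑ s ∈ range (r j + 1), binomPMF (p j) (r j) s * h0 s) else 1 := by
      intro i
      by_cases hij : i = j
      · subst hij; simp
      · simp only [hij, if_false, mul_one]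
        exact sum_pmf_one _ _
    rw [Finset.prod_congr rfl (fun i _ => e3 i)]
    rw [Finset.prod_ite_eq' univ j
      (fun _ => ∑ s ∈ range (r j + 1), binomPMF (p j) (r j) s * h0 s)]
    simp
  rw [← e2, ← hh]
  exact jointExp_congr p r (fun b => by rw [← e1 b])

theorem jointExp_two (hi hj : ℕ → ℝ) (i j : Fin k) (hij : i ≠ j) :
    jointExp p r (fun b => hi (b i) * hj (b j))
      = (∑ s ∈ range (r i + 1), binomPMF (p i) (r i) s * hi s)
        * (∑ s ∈ range (r j + 1), binomPMF (p j) (r j) s * hj s) := by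
  classical
  have hh := jointExp_prod p r
    (fun l s => if l = i then hi s else if l = j then hj s else 1)
  have e1 : ∀ b : Fin k → ℕ,
      (∏ l, if l = i then hi (b l) else if l = j then hj (b l) else 1)
        = hi (b i) * hj (b j) := by
    intro b
    rw [← Finset.mul_prod_erase univ _ (mem_univ i)]
    simp only [if_pos rfl]
    congr 1
    rw [← Finset.mul_prod_erase (univ.erase i) _
      (Finset.mem_erase.mpr ⟨Ne.symm hij, mem_univ j⟩)]
    simp only [if_neg (Ne.symm hij), if_pos rfl]
    have : ∀ l ∈ (univ.erase i).erase j,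
        (if l = i then hi (b l) else if l = j then hj (b l) else 1) = 1 := by
      intro l hl
      have h1 : l ≠ j := (Finset.mem_erase.mp hl).1
      have h2 : l ≠ i := (Finset.mem_erase.mp (Finset.mem_erase.mp hl).2).1
      simp [h1, h2]
    rw [Finset.prod_congr rfl this, Finset.prod_const_one, mul_one]
    simp
  have e2 : ∀ l : Fin k, (∑ s ∈ range (r l + 1), binomPMF (p l) (r l) s *
      (if l = i then hi s else if l = j then hj s else 1))
      = if l = i then (∑ s ∈ range (r i + 1), binomPMF (p i) (r i) s * hi s)
        else if l = j then (∑ s ∈ range (r j + 1), binomPMF (p j) (r j) s * hj s)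
        else 1 := by
    intro l
    by_cases h1 : l = i
    · subst h1; simp
    · by_cases h2 : l = j
      · subst h2; simp [h1]
      · simp only [h1, h2, if_false, mul_one]
        exact sum_pmf_one _ _
  rw [jointExp_congr p r (fun b => (e1 b).symm), hh,
    Finset.prod_congr rfl (fun l _ => e2 l)]
  rw [← Finset.mul_prod_erase univ _ (mem_univ i)]
  simp only [if_pos rfl]
  congr 1
  rw [← Finset.mul_prod_erase (univ.erase i) _
    (Finset.mem_erase.mpr ⟨Ne.symm hij, mem_univ j⟩)]
  simp only [if_neg (Ne.symm hij), if_pos rfl]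
  have : ∀ l ∈ (univ.erase i).erase j,
      (if l = i then (∑ s ∈ range (r i + 1), binomPMF (p i) (r i) s * hi s)
        else if l = j then (∑ s ∈ range (r j + 1), binomPMF (p j) (r j) s * hj s)
        else 1) = 1 := by
    intro l hl
    have h1 : l ≠ j := (Finset.mem_erase.mp hl).1
    have h2 : l ≠ i := (Finset.mem_erase.mp (Finset.mem_erase.mp hl).2).1
    simp [h1, h2]
  rw [Finset.prod_congr rfl this, Finset.prod_const_one, mul_one]
  simp

variable (d : Fin k → ℕ)

theorem jointExp_meanlin :
    jointExp p r (fun b => ∑ j, (d j : ℝ) * (b j : ℝ))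
      = ∑ j, (d j : ℝ) * ((r j : ℝ) * p j) := by
  rw [jointExp_sum]
  apply Finset.sum_congr rfl
  intro j _
  rw [jointExp_const_mul]
  congr 1
  have := jointExp_single p r (fun s => (s : ℝ)) j
  rw [this, sum_pmf_mean]

theorem jointExp_varlin :
    jointExp p r (fun b => (∑ j, (d j : ℝ) * ((b j : ℝ) - (r j : ℝ) * p j))^2)
      = ∑ j, (d j : ℝ)^2 * ((r j : ℝ) * p j * (1 - p j)) := by
  classical
  have e1 : ∀ b : Fin k → ℕ,
      (∑ j, (d j : ℝ) * ((b j : ℝ) - (r j : ℝ) * p j))^2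
      = ∑ i, ∑ j, ((d i : ℝ) * (d j : ℝ)) *
          (((b i : ℝ) - (r i : ℝ) * p i) * ((b j : ℝ) - (r j : ℝ) * p j)) := by
    intro b
    rw [sq, Finset.sum_mul_sum]
    apply Finset.sum_congr rfl; intro i _
    apply Finset.sum_congr rfl; intro j _
    ring
  rw [jointExp_congr p r e1, jointExp_sum]
  have e2 : ∀ i : Fin k, jointExp p r (fun b => ∑ j, ((d i : ℝ) * (d j : ℝ)) *
      (((b i : ℝ) - (r i : ℝ) * p i) * ((b j : ℝ) - (r j : ℝ) * p j)))
      = (d i : ℝ)^2 * ((r i : ℝ) * p i * (1 - p i)) := by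
    intro i
    rw [jointExp_sum]
    rw [Finset.sum_eq_single i]
    · rw [jointExp_const_mul]
      have := jointExp_single p r (fun s => ((s : ℝ) - (r i : ℝ) * p i)^2) i
      have e3 : jointExp p r (fun b =>
          ((b i : ℝ) - (r i : ℝ) * p i) * ((b i : ℝ) - (r i : ℝ) * p i))
          = (r i : ℝ) * p i * (1 - p i) := by
        rw [jointExp_congr p r (h := fun b => ((b i : ℝ) - (r i : ℝ) * p i)^2)
          (fun b => by ring), this]
        exact sum_pmf_centered_sq (p i) (r i)
      rw [e3]; ring
    · intro j _ hji
      rw [jointExp_const_mul]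
      have := jointExp_two p r (fun s => (s : ℝ) - (r i : ℝ) * p i)
        (fun s => (s : ℝ) - (r j : ℝ) * p j) i j (Ne.symm hji)
      rw [this]
      have z1 : ∑ s ∈ range (r i + 1), binomPMF (p i) (r i) s *
          ((s:ℝ) - (r i : ℝ) * p i) = 0 := by
        exact sum_pmf_centered (p i) (r i)
      rw [z1]; ring
    · intro hi; exact absurd (mem_univ i) hi
  rw [Finset.sum_congr rfl (fun i _ => e2 i)]
end

section
theorem max_le_max_add_abs (a b : ℝ) : max a 0 ≤ max b 0 + |a - b| := by
  rcases le_or_gt a b with h | h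
  · calc max a 0 ≤ max b 0 := max_le_max h le_rfl
      _ ≤ max b 0 + |a - b| := le_add_of_nonneg_right (abs_nonneg _)
  · have : |a - b| = a - b := abs_of_pos (by linarith)
    rw [this]
    apply max_le
    · have : b ≤ max b 0 := le_max_left _ _
      linarith
    · have h1 : (0:ℝ) ≤ max b 0 := le_max_right _ _
      linarith

variable {k : ℕ} (p : Fin k → ℝ) (hp : ∀ j, 0 ≤ p j ∧ p j ≤ 1) (d : Fin k → ℕ)
include hp

theorem inner_compare (rA rC : Fin k → ℕ) (t : ℝ) :
    jointExp p rA (fun b => max (t + ∑ j, (d j : ℝ) * (b j : ℝ)) 0)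
      ≤ jointExp p rC (fun b => max (t + ∑ j, (d j : ℝ) * (b j : ℝ)) 0)
        + Real.sqrt (∑ j, (d j : ℝ)^2 * ((rA j : ℝ) * p j * (1 - p j)))
        + Real.sqrt (∑ j, (d j : ℝ)^2 * ((rC j : ℝ) * p j * (1 - p j)))
        + |(∑ j, (d j : ℝ) * ((rA j : ℝ) * p j)) - (∑ j, (d j : ℝ) * ((rC j : ℝ) * p j))| := by
  set P := ∑ j, (d j : ℝ) * ((rA j : ℝ) * p j) with hP
  set M := ∑ j, (d j : ℝ) * ((rC j : ℝ) * p j) with hM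
  -- step 1
  have h1 : jointExp p rA (fun b => max (t + ∑ j, (d j : ℝ) * (b j : ℝ)) 0)
      ≤ max (t + P) 0
        + Real.sqrt (∑ j, (d j : ℝ)^2 * ((rA j : ℝ) * p j * (1 - p j))) := by
    have e1 : ∀ b : Fin k → ℕ, max (t + ∑ j, (d j : ℝ) * (b j : ℝ)) 0
        ≤ max (t + P) 0 + |∑ j, (d j : ℝ) * ((b j : ℝ) - (rA j : ℝ) * p j)| := by
      intro b
      have := max_le_max_add_abs (t + ∑ j, (d j : ℝ) * (b j : ℝ)) (t + P)
      have esum : ∑ j, (d j : ℝ) * ((b j : ℝ) - (rA j : ℝ) * p j)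
          = (∑ j, (d j : ℝ) * (b j : ℝ)) - ∑ j, (d j : ℝ) * ((rA j : ℝ) * p j) := by
        rw [← Finset.sum_sub_distrib]
        apply Finset.sum_congr rfl; intro j _; ring
      have e2 : (t + ∑ j, (d j : ℝ) * (b j : ℝ)) - (t + P)
          = ∑ j, (d j : ℝ) * ((b j : ℝ) - (rA j : ℝ) * p j) := by
        rw [esum, hP]; ring
      rwa [e2] at this
    have habs : jointExp p rA
        (fun b => |∑ j, (d j : ℝ) * ((b j : ℝ) - (rA j : ℝ) * p j)|)
        ≤ Real.sqrt (∑ j, (d j : ℝ)^2 * ((rA j : ℝ) * p j * (1 - p j))) := by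
      have h0 := jointExp_abs_le_sqrt p rA hp
        (fun b => ∑ j, (d j : ℝ) * ((b j : ℝ) - (rA j : ℝ) * p j))
      rw [jointExp_varlin] at h0
      exact h0
    calc jointExp p rA (fun b => max (t + ∑ j, (d j : ℝ) * (b j : ℝ)) 0)
        ≤ jointExp p rA (fun b => max (t + P) 0
            + |∑ j, (d j : ℝ) * ((b j : ℝ) - (rA j : ℝ) * p j)|) :=
          jointExp_mono p rA hp e1
      _ = max (t + P) 0 + jointExp p rA
            (fun b => |∑ j, (d j : ℝ) * ((b j : ℝ) - (rA j : ℝ) * p j)|) := by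
          rw [jointExp_add]; rw [jointExp_const]
      _ ≤ max (t + P) 0
            + Real.sqrt (∑ j, (d j : ℝ)^2 * ((rA j : ℝ) * p j * (1 - p j))) :=
          add_le_add_right habs _
  -- step 2
  have h2 : max (t + P) 0 ≤ max (t + M) 0 + |P - M| := by
    have := max_le_max_add_abs (t + P) (t + M)
    have e : (t + P) - (t + M) = P - M := by ring
    rwa [e] at this
  -- step 3
  have h3 : max (t + M) 0 ≤ jointExp p rC
      (fun b => max (t + ∑ j, (d j : ℝ) * (b j : ℝ)) 0) := by
    have hm : jointExp p rC (fun b => t + ∑ j, (d j : ℝ) * (b j : ℝ)) = t + M := by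
      have := jointExp_add p rC (fun _ => t) (fun b => ∑ j, (d j : ℝ) * (b j : ℝ))
      rw [this, jointExp_const, jointExp_meanlin, hM]
    apply max_le
    · rw [← hm]
      apply jointExp_mono p rC hp
      intro b
      exact le_max_left _ _
    · apply jointExp_nonneg p rC hp
      intro b
      exact le_max_right _ _
  have s1 : 0 ≤ Real.sqrt (∑ j, (d j : ℝ)^2 * ((rC j : ℝ) * p j * (1 - p j))) :=
    Real.sqrt_nonneg _
  linarith

theorem VdB_compare (B : ℕ) (c rA rC : Fin k → ℕ) :
    VdB p d B (fun j => c j + rA j) ≤ VdB p d B (fun j => c j + rC j)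
      + Real.sqrt (∑ j, (d j : ℝ)^2 * ((rA j : ℝ) * p j * (1 - p j)))
      + Real.sqrt (∑ j, (d j : ℝ)^2 * ((rC j : ℝ) * p j * (1 - p j)))
      + |(∑ j, (d j : ℝ) * ((rA j : ℝ) * p j)) - (∑ j, (d j : ℝ) * ((rC j : ℝ) * p j))| := by
  set K0 := Real.sqrt (∑ j, (d j : ℝ)^2 * ((rA j : ℝ) * p j * (1 - p j)))
      + Real.sqrt (∑ j, (d j : ℝ)^2 * ((rC j : ℝ) * p j * (1 - p j)))
      + |(∑ j, (d j : ℝ) * ((rA j : ℝ) * p j)) - (∑ j, (d j : ℝ) * ((rC j : ℝ) * p j))|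
    with hK0
  have esplit : ∀ r : Fin k → ℕ, VdB p d B (fun j => c j + r j)
      = jointExp p c (fun u => jointExp p r
          (fun b => max ((∑ j, (d j : ℝ) * (u j : ℝ) - (B:ℝ)) + ∑ j, (d j : ℝ) * (b j : ℝ)) 0)) := by
    intro r
    unfold VdB
    rw [jointExp_split]
    apply jointExp_congr
    intro u
    apply jointExp_congr
    intro b
    congr 1
    push_cast
    have esum : ∑ x, (d x : ℝ) * ((u x : ℝ) + (b x : ℝ))
        = (∑ j, (d j : ℝ) * (u j : ℝ)) + ∑ j, (d j : ℝ) * (b j : ℝ) := by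
      rw [← Finset.sum_add_distrib]
      apply Finset.sum_congr rfl; intro j _; ring
    rw [esum]; ring
  rw [esplit rA, esplit rC]
  have hpt : ∀ u : Fin k → ℕ,
      jointExp p rA (fun b => max ((∑ j, (d j : ℝ) * (u j : ℝ) - (B:ℝ))
          + ∑ j, (d j : ℝ) * (b j : ℝ)) 0)
      ≤ jointExp p rC (fun b => max ((∑ j, (d j : ℝ) * (u j : ℝ) - (B:ℝ))
          + ∑ j, (d j : ℝ) * (b j : ℝ)) 0) + K0 := by
    intro u
    have := inner_compare p hp d rA rC (∑ j, (d j : ℝ) * (u j : ℝ) - (B:ℝ))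
    rw [hK0]; linarith
  calc jointExp p c (fun u => jointExp p rA (fun b => max ((∑ j, (d j : ℝ) * (u j : ℝ) - (B:ℝ))
          + ∑ j, (d j : ℝ) * (b j : ℝ)) 0))
      ≤ jointExp p c (fun u => jointExp p rC (fun b => max ((∑ j, (d j : ℝ) * (u j : ℝ) - (B:ℝ))
          + ∑ j, (d j : ℝ) * (b j : ℝ)) 0) + K0) := jointExp_mono p c hp hpt
    _ = jointExp p c (fun u => jointExp p rC (fun b => max ((∑ j, (d j : ℝ) * (u j : ℝ) - (B:ℝ))
          + ∑ j, (d j : ℝ) * (b j : ℝ)) 0)) + K0 := by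
        rw [jointExp_add, jointExp_const]
    _ = jointExp p c (fun u => jointExp p rC (fun b => max ((∑ j, (d j : ℝ) * (u j : ℝ) - (B:ℝ))
          + ∑ j, (d j : ℝ) * (b j : ℝ)) 0))
        + Real.sqrt (∑ j, (d j : ℝ)^2 * ((rA j : ℝ) * p j * (1 - p j)))
        + Real.sqrt (∑ j, (d j : ℝ)^2 * ((rC j : ℝ) * p j * (1 - p j)))
        + |(∑ j, (d j : ℝ) * ((rA j : ℝ) * p j)) - (∑ j, (d j : ℝ) * ((rC j : ℝ) * p j))| := by
        rw [hK0]; ring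
end

section
variable {k : ℕ} (v p : Fin k → ℝ) (d : Fin k → ℕ) (B : ℕ)

theorem obj_zero (x : Fin k → ℕ) :
    objFnD v p d B (fun _ => 0) x = (∑ j, v j * (x j : ℝ)) - VdB p d B x := by
  unfold objFnD
  have h1 : (fun j => 0 + x j) = x := by funext j; omega
  rw [h1]
  congr 1
  apply Finset.sum_congr rfl
  intro j _
  norm_num

/-- The core exchange inequality. -/
theorem core_ineq
    (hp : ∀ j, 0 < p j ∧ p j < 1)
    (hd : ∀ j, 0 < d j)
    (hv : ∀ j, 0 < v j)
    (hq1 : ∀ j, v j < (d j : ℝ) * p j)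
    (g : ℝ) (hg0 : 0 < g) (hg1 : g ≤ 1)
    (hgap : ∀ i j : Fin k, i < j →
      g ≤ v i / ((d i : ℝ) * p i) - v j / ((d j : ℝ) * p j))
    (N x xI : Fin k → ℕ) (t : Fin k)
    (hxN : ∀ j, x j ≤ N j)
    (hIlt : ∀ j, j < t → xI j = N j)
    (hIgt : ∀ j, t < j → xI j = 0)
    (heps : |(∑ j, (d j : ℝ) * p j * (xI j : ℝ)) - ∑ j, (d j : ℝ) * p j * (x j : ℝ)|
      ≤ ∑ j, (d j : ℝ)) :
    objFnD v p d B (fun _ => 0) x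
      ≤ objFnD v p d B (fun _ => 0) xI
        + (4 * (∑ j, (d j : ℝ)) + 2 * (∑ j, (d j : ℝ)) / g) := by
  classical
  set K := ∑ j, (d j : ℝ) with hK
  have hp01 : ∀ j, 0 ≤ p j ∧ p j ≤ 1 := fun j => ⟨le_of_lt (hp j).1, le_of_lt (hp j).2⟩
  have hdp : ∀ j, 0 < (d j : ℝ) * p j := fun j =>
    mul_pos (by exact_mod_cast (hd j)) (hp j).1
  have hKpos : 0 < K := by
    rw [hK]
    apply Finset.sum_pos (fun j _ => by exact_mod_cast hd j)
    exact ⟨t, mem_univ t⟩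
  have hdK : ∀ j : Fin k, (d j : ℝ) ≤ K := by
    intro j
    rw [hK]
    exact Finset.single_le_sum (f := fun j => (d j : ℝ))
      (fun i _ => by positivity) (mem_univ j)
  set q : Fin k → ℝ := fun j => v j / ((d j : ℝ) * p j) with hq
  set δ : Fin k → ℝ := fun j => (d j : ℝ) * p j * ((xI j : ℝ) - (x j : ℝ)) with hδ
  set rA : Fin k → ℕ := fun j => xI j - x j with hrA
  set rC : Fin k → ℕ := fun j => x j - xI j with hrC
  set c : Fin k → ℕ := fun j => min (x j) (xI j) with hc
  have hcA : ∀ j, c j + rA j = xI j := by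
    intro j; simp only [hc, hrA]; omega
  have hcC : ∀ j, c j + rC j = x j := by
    intro j; simp only [hc, hrC]; omega
  have hrAnn : ∀ j, (0:ℝ) ≤ (d j : ℝ) * ((rA j : ℝ) * p j) := fun j =>
    mul_nonneg (Nat.cast_nonneg _) (mul_nonneg (Nat.cast_nonneg _) (hp01 j).1)
  have hrCnn : ∀ j, (0:ℝ) ≤ (d j : ℝ) * ((rC j : ℝ) * p j) := fun j =>
    mul_nonneg (Nat.cast_nonneg _) (mul_nonneg (Nat.cast_nonneg _) (hp01 j).1)
  -- per-coordinate identities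
  have hj1 : ∀ j, (d j : ℝ) * ((rA j : ℝ) * p j) - (d j : ℝ) * ((rC j : ℝ) * p j)
      = δ j := by
    intro j
    rcases le_or_gt (x j) (xI j) with h | h
    · have e1 : (rA j : ℝ) = (xI j : ℝ) - (x j : ℝ) := by
        simp only [hrA]; push_cast [Nat.cast_sub h]; ring
      have e2 : rC j = 0 := by simp only [hrC]; omega
      rw [e1, e2]; simp only [hδ]; push_cast; ring
    · have e1 : (rC j : ℝ) = (x j : ℝ) - (xI j : ℝ) := by
        simp only [hrC]; push_cast [Nat.cast_sub (le_of_lt h)]; ring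
      have e2 : rA j = 0 := by simp only [hrA]; omega
      rw [e1, e2]; simp only [hδ]; push_cast; ring
  have hj2 : ∀ j, (d j : ℝ) * ((rA j : ℝ) * p j) + (d j : ℝ) * ((rC j : ℝ) * p j)
      = |δ j| := by
    intro j
    rcases le_or_gt (x j) (xI j) with h | h
    · have e1 : (rA j : ℝ) = (xI j : ℝ) - (x j : ℝ) := by
        simp only [hrA]; push_cast [Nat.cast_sub h]; ring
      have e2 : rC j = 0 := by simp only [hrC]; omega
      have e3 : |δ j| = δ j := by
        apply abs_of_nonneg
        simp only [hδ]
        apply mul_nonneg (le_of_lt (hdp j))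
        have hc2 : (x j : ℝ) ≤ (xI j : ℝ) := by exact_mod_cast h
        linarith
      rw [e1, e2, e3]; simp only [hδ]; push_cast; ring
    · have e1 : (rC j : ℝ) = (x j : ℝ) - (xI j : ℝ) := by
        simp only [hrC]; push_cast [Nat.cast_sub (le_of_lt h)]; ring
      have e2 : rA j = 0 := by simp only [hrA]; omega
      have e3 : |δ j| = -δ j := by
        apply abs_of_nonpos
        simp only [hδ]
        have h4 : (xI j : ℝ) - (x j : ℝ) ≤ 0 := by
          have hc2 : (xI j : ℝ) ≤ (x j : ℝ) := by exact_mod_cast (le_of_lt h)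
          linarith
        exact mul_nonpos_of_nonneg_of_nonpos (le_of_lt (hdp j)) h4
      rw [e1, e2, e3]; simp only [hδ]; push_cast; ring
  set P := ∑ j, (d j : ℝ) * ((rA j : ℝ) * p j) with hP
  set M := ∑ j, (d j : ℝ) * ((rC j : ℝ) * p j) with hM
  set ε := ∑ j, δ j with hε
  have hPsubM : P - M = ε := by
    rw [hP, hM, hε, ← Finset.sum_sub_distrib]
    exact Finset.sum_congr rfl (fun j _ => hj1 j)
  have hPaddM : P + M = ∑ j, |δ j| := by
    rw [hP, hM, ← Finset.sum_add_distrib]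
    exact Finset.sum_congr rfl (fun j _ => hj2 j)
  have hPnn : 0 ≤ P := Finset.sum_nonneg (fun j _ => hrAnn j)
  have hMnn : 0 ≤ M := Finset.sum_nonneg (fun j _ => hrCnn j)
  have hεK : |ε| ≤ K := by
    rw [hε]
    have e : ∑ j, δ j = (∑ j, (d j : ℝ) * p j * (xI j : ℝ))
        - ∑ j, (d j : ℝ) * p j * (x j : ℝ) := by
      rw [← Finset.sum_sub_distrib]
      apply Finset.sum_congr rfl
      intro j _
      simp only [hδ]; ring
    rw [e]; exact heps
  -- gap bound
  set G : ℝ := ∑ j, (q j - q t) * δ j with hG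
  set S2 : ℝ := ∑ j ∈ univ.erase t, |δ j| with hS2
  have hterm : ∀ j ∈ univ.erase t, g * |δ j| ≤ (q j - q t) * δ j := by
    intro j hj
    have hjt : j ≠ t := (Finset.mem_erase.mp hj).1
    rcases lt_or_gt_of_ne hjt with hlt | hgt
    · -- j < t: δ j ≥ 0 and q j - q t ≥ g
      have hxle : x j ≤ xI j := by rw [hIlt j hlt]; exact hxN j
      have hδnn : 0 ≤ δ j := by
        simp only [hδ]
        apply mul_nonneg (le_of_lt (hdp j))
        have hc2 : (x j : ℝ) ≤ (xI j : ℝ) := by exact_mod_cast hxle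
        linarith
      have hgapj := hgap j t hlt
      rw [abs_of_nonneg hδnn]
      exact mul_le_mul_of_nonneg_right hgapj hδnn
    · -- t < j: δ j ≤ 0 and q j - q t ≤ -g
      have hδnp : δ j ≤ 0 := by
        simp only [hδ, hIgt j hgt]
        have h4 : ((0:ℕ):ℝ) - (x j : ℝ) ≤ 0 := by
          have : (0:ℝ) ≤ (x j : ℝ) := Nat.cast_nonneg _
          simp
        exact mul_nonpos_of_nonneg_of_nonpos (le_of_lt (hdp j)) h4
      have hgapj := hgap t j hgt
      rw [abs_of_nonpos hδnp]
      nlinarith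
  have hGS2 : g * S2 ≤ G := by
    have h1 : G = ∑ j ∈ univ.erase t, (q j - q t) * δ j := by
      rw [hG, ← Finset.add_sum_erase univ _ (mem_univ t)]
      simp
    rw [h1, hS2, Finset.mul_sum]
    exact Finset.sum_le_sum hterm
  have hS2nn : 0 ≤ S2 := Finset.sum_nonneg (fun j _ => abs_nonneg _)
  have hGnn : 0 ≤ G := le_trans (by positivity) hGS2
  have hδt : |δ t| ≤ |ε| + S2 := by
    have h1 : ε = δ t + ∑ j ∈ univ.erase t, δ j := by
      rw [hε, ← Finset.add_sum_erase univ _ (mem_univ t)]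
    have h2 : |∑ j ∈ univ.erase t, δ j| ≤ S2 := by
      rw [hS2]; exact Finset.abs_sum_le_sum_abs _ _
    have h3 : |δ t| ≤ |ε| + |∑ j ∈ univ.erase t, δ j| := by
      have h4 : δ t = ε - ∑ j ∈ univ.erase t, δ j := by rw [h1]; ring
      rw [h4]
      exact abs_sub _ _
    linarith
  have hPMbound : P + M ≤ K + 2 * (G / g) := by
    have h1 : ∑ j, |δ j| = |δ t| + S2 := by
      rw [hS2, ← Finset.add_sum_erase univ _ (mem_univ t)]
    have h2 : S2 ≤ G / g := by
      rw [le_div_iff₀ hg0]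
      linarith [hGS2]
    rw [hPaddM, h1]
    linarith [hεK]
  -- revenue identity
  have hrev : (∑ j, v j * (xI j : ℝ)) - ∑ j, v j * (x j : ℝ) = G + q t * ε := by
    have h1 : ∀ j : Fin k, v j * (xI j : ℝ) - v j * (x j : ℝ) = q j * δ j := by
      intro j
      have hne : (d j : ℝ) * p j ≠ 0 := ne_of_gt (hdp j)
      have h5 : q j * δ j = v j * ((xI j : ℝ) - (x j : ℝ)) := by
        simp only [hq, hδ]
        rw [div_mul_eq_mul_div, div_eq_iff hne]
        ring
      rw [h5]; ring
    have h2 : (∑ j, v j * (xI j : ℝ)) - ∑ j, v j * (x j : ℝ) = ∑ j, q j * δ j := by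
      rw [← Finset.sum_sub_distrib]
      exact Finset.sum_congr rfl (fun j _ => h1 j)
    rw [h2, hG, hε, Finset.mul_sum, ← Finset.sum_add_distrib]
    apply Finset.sum_congr rfl
    intro j _
    ring
  have hqt : 0 < q t ∧ q t ≤ 1 := by
    constructor
    · simp only [hq]; exact div_pos (hv t) (hdp t)
    · simp only [hq]; rw [div_le_one (hdp t)]; exact le_of_lt (hq1 t)
  -- V comparison
  have hVA : (∑ j, (d j : ℝ)^2 * ((rA j : ℝ) * p j * (1 - p j))) ≤ K * P := by
    rw [hP, Finset.mul_sum]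
    apply Finset.sum_le_sum
    intro j _
    have h1 : (0:ℝ) ≤ (rA j : ℝ) * p j := mul_nonneg (Nat.cast_nonneg _) (hp01 j).1
    have h2 : (1 - p j) ≤ 1 := by linarith [(hp j).1]
    calc (d j : ℝ)^2 * ((rA j : ℝ) * p j * (1 - p j))
        ≤ (d j : ℝ)^2 * ((rA j : ℝ) * p j * 1) := by
          apply mul_le_mul_of_nonneg_left _ (by positivity)
          apply mul_le_mul_of_nonneg_left h2 h1
      _ = (d j : ℝ) * ((d j:ℝ) * ((rA j : ℝ) * p j)) := by ring
      _ ≤ K * ((d j:ℝ) * ((rA j : ℝ) * p j)) :=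
          mul_le_mul_of_nonneg_right (hdK j) (hrAnn j)
  have hVC : (∑ j, (d j : ℝ)^2 * ((rC j : ℝ) * p j * (1 - p j))) ≤ K * M := by
    rw [hM, Finset.mul_sum]
    apply Finset.sum_le_sum
    intro j _
    have h1 : (0:ℝ) ≤ (rC j : ℝ) * p j := mul_nonneg (Nat.cast_nonneg _) (hp01 j).1
    have h2 : (1 - p j) ≤ 1 := by linarith [(hp j).1]
    calc (d j : ℝ)^2 * ((rC j : ℝ) * p j * (1 - p j))
        ≤ (d j : ℝ)^2 * ((rC j : ℝ) * p j * 1) := by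
          apply mul_le_mul_of_nonneg_left _ (by positivity)
          apply mul_le_mul_of_nonneg_left h2 h1
      _ = (d j : ℝ) * ((d j:ℝ) * ((rC j : ℝ) * p j)) := by ring
      _ ≤ K * ((d j:ℝ) * ((rC j : ℝ) * p j)) :=
          mul_le_mul_of_nonneg_right (hdK j) (hrCnn j)
  have hcompare := VdB_compare p hp01 d B c rA rC
  have hVxI : VdB p d B xI = VdB p d B (fun j => c j + rA j) := by
    congr 1; funext j; rw [hcA j]
  have hVx : VdB p d B x = VdB p d B (fun j => c j + rC j) := by
    congr 1; funext j; rw [hcC j]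
  -- sqrt bounds
  have hsA : Real.sqrt (∑ j, (d j : ℝ)^2 * ((rA j : ℝ) * p j * (1 - p j)))
      ≤ Real.sqrt (K * (P + M)) := by
    apply Real.sqrt_le_sqrt
    calc (∑ j, (d j : ℝ)^2 * ((rA j : ℝ) * p j * (1 - p j))) ≤ K * P := hVA
      _ ≤ K * (P + M) := by nlinarith
  have hsC : Real.sqrt (∑ j, (d j : ℝ)^2 * ((rC j : ℝ) * p j * (1 - p j)))
      ≤ Real.sqrt (K * (P + M)) := by
    apply Real.sqrt_le_sqrt
    calc (∑ j, (d j : ℝ)^2 * ((rC j : ℝ) * p j * (1 - p j))) ≤ K * M := hVC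
      _ ≤ K * (P + M) := by nlinarith
  have hsqrtPM : Real.sqrt (K * (P + M)) ≤ K + Real.sqrt (2 * K * (G / g)) := by
    have h1 : K * (P + M) ≤ K^2 + 2 * K * (G / g) := by
      calc K * (P + M) ≤ K * (K + 2 * (G / g)) :=
            mul_le_mul_of_nonneg_left hPMbound (le_of_lt hKpos)
        _ = K^2 + 2 * K * (G / g) := by ring
    calc Real.sqrt (K * (P + M)) ≤ Real.sqrt (K^2 + 2 * K * (G / g)) :=
          Real.sqrt_le_sqrt h1
      _ ≤ K + Real.sqrt (2 * K * (G / g)) := by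
          rw [Real.sqrt_le_iff]
          have hGg : (0:ℝ) ≤ 2 * K * (G / g) := by positivity
          constructor
          · positivity
          · have h2 : (Real.sqrt (2 * K * (G / g)))^2 = 2 * K * (G / g) :=
              Real.sq_sqrt hGg
            have h3 : 0 ≤ Real.sqrt (2 * K * (G / g)) := Real.sqrt_nonneg _
            have h4 : 0 ≤ 2 * K * Real.sqrt (2 * K * (G / g)) := by positivity
            have h5 : (K + Real.sqrt (2 * K * (G / g)))^2
                = K^2 + 2 * K * Real.sqrt (2 * K * (G / g))
                  + (Real.sqrt (2 * K * (G / g)))^2 := by ring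
            rw [h5, h2]
            linarith
  have hamgm : Real.sqrt (2 * K * (G / g)) ≤ K / g + G / 2 := by
    have hu : (0:ℝ) ≤ 2 * K / g := by positivity
    have h1 : 2 * K * (G / g) = (2 * K / g) * G := by ring
    rw [h1]
    have h2 : Real.sqrt ((2 * K / g) * G) ≤ (2 * K / g + G) / 2 := by
      rw [Real.sqrt_le_iff]
      constructor
      · positivity
      · nlinarith [sq_nonneg (2 * K / g - G)]
    calc Real.sqrt ((2 * K / g) * G) ≤ (2 * K / g + G) / 2 := h2
      _ = K / g + G / 2 := by ring
  -- assemble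
  rw [obj_zero, obj_zero]
  have hVbound : VdB p d B xI ≤ VdB p d B x
      + 2 * Real.sqrt (K * (P + M)) + K := by
    rw [hVxI, hVx]
    have habs : |P - M| ≤ K := by rw [hPsubM]; exact hεK
    have h6 := hcompare
    rw [← hP, ← hM] at h6
    linarith [hsA, hsC]
  have hqtε : q t * ε ≥ -K := by
    have h1 : |q t * ε| ≤ |ε| := by
      rw [abs_mul, abs_of_pos hqt.1]
      calc q t * |ε| ≤ 1 * |ε| :=
            mul_le_mul_of_nonneg_right hqt.2 (abs_nonneg _)
        _ = |ε| := one_mul _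
    have h2 := neg_abs_le (q t * ε)
    linarith [hεK]
  have hdiv : 2 * K / g = 2 * (K / g) := by ring
  linarith [hVbound, hrev, hqtε, hsqrtPM, hamgm, hGnn, hdiv]
end

section
variable {k : ℕ} (p : Fin k → ℝ) (d : Fin k → ℕ)

theorem exists_index_near (hp : ∀ j, 0 < p j ∧ p j < 1) (hd : ∀ j, 0 < d j)
    (hk : 1 ≤ k) (N x : Fin k → ℕ) (hxN : ∀ j, x j ≤ N j) :
    ∃ (xI : Fin k → ℕ) (t : Fin k),
      (∀ j, xI j ≤ N j) ∧
      (∀ j, j < t → xI j = N j) ∧ (∀ j, t < j → xI j = 0) ∧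
      |(∑ j, (d j : ℝ) * p j * (xI j : ℝ)) - ∑ j, (d j : ℝ) * p j * (x j : ℝ)|
        ≤ ∑ j, (d j : ℝ) := by
  classical
  set w : Fin k → ℝ := fun j => (d j : ℝ) * p j * (N j : ℝ) with hw
  set μ := ∑ j, (d j : ℝ) * p j * (x j : ℝ) with hμ
  set C : ℕ → ℝ := fun i => ∑ j ∈ univ.filter (fun j : Fin k => (j : ℕ) < i), w j
    with hC
  have hwnn : ∀ j, 0 ≤ w j := by
    intro j
    apply mul_nonneg (mul_nonneg (Nat.cast_nonneg _) (le_of_lt (hp j).1))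
      (Nat.cast_nonneg _)
  have hdpnn : ∀ j : Fin k, (0:ℝ) ≤ (d j : ℝ) * p j := fun j =>
    mul_nonneg (Nat.cast_nonneg _) (le_of_lt (hp j).1)
  have hμ0 : 0 ≤ μ := Finset.sum_nonneg fun j _ =>
    mul_nonneg (hdpnn j) (Nat.cast_nonneg _)
  have hC0 : C 0 = 0 := by simp [hC]
  have hCk : C k = ∑ j, w j := by
    simp only [hC]
    congr 1
    apply Finset.filter_true_of_mem
    intro j _
    exact j.isLt
  have hμCk : μ ≤ C k := by
    rw [hCk, hμ]
    apply Finset.sum_le_sum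
    intro j _
    rw [hw]
    have : (x j : ℝ) ≤ (N j : ℝ) := by exact_mod_cast hxN j
    have h2 : (d j : ℝ) * p j * (x j : ℝ) ≤ (d j : ℝ) * p j * (N j : ℝ) :=
      mul_le_mul_of_nonneg_left this (hdpnn j)
    exact h2
  have hKnn : (0:ℝ) ≤ ∑ j, (d j : ℝ) := Finset.sum_nonneg fun j _ => Nat.cast_nonneg _
  have hdK : ∀ j : Fin k, (d j : ℝ) ≤ ∑ j, (d j : ℝ) := fun j =>
    Finset.single_le_sum (f := fun j => (d j : ℝ)) (fun i _ => Nat.cast_nonneg _)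
      (mem_univ j)
  have hstep : ∀ (i : ℕ) (h : i < k), C (i + 1) = C i + w ⟨i, h⟩ := by
    intro i h
    simp only [hC]
    have hset : univ.filter (fun j : Fin k => (j : ℕ) < i + 1)
        = insert (⟨i, h⟩ : Fin k) (univ.filter (fun j : Fin k => (j : ℕ) < i)) := by
      apply Finset.ext
      intro j
      simp only [Finset.mem_filter, Finset.mem_insert, mem_univ, true_and]
      constructor
      · intro hj
        rcases Nat.lt_succ_iff_lt_or_eq.mp hj with h1 | h1
        · right; exact h1
        · left; exact Fin.ext h1
      · intro hj
        rcases hj with h1 | h1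
        · rw [h1]; simp
        · omega
    rw [hset, Finset.sum_insert]
    · ring
    · simp only [Finset.mem_filter, mem_univ, true_and]
      omega
  by_cases hA : C k ≤ μ
  · -- take xI = N
    refine ⟨N, ⟨k - 1, by omega⟩, fun j => le_rfl, fun j _ => rfl, ?_, ?_⟩
    · intro j hj
      exfalso
      have h1 : (j : ℕ) < k := j.isLt
      have h2 : k - 1 < (j : ℕ) := hj
      omega
    · have he : ∑ j, (d j : ℝ) * p j * (N j : ℝ) = C k := by
        rw [hCk]
      rw [he]
      have : C k = μ := le_antisymm hA hμCk
      rw [this]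
      simpa using hKnn
  · push_neg at hA
    set S := (range (k + 1)).filter (fun i => C i ≤ μ) with hS
    have hS0 : 0 ∈ S := by
      rw [hS]
      simp only [Finset.mem_filter, Finset.mem_range]
      exact ⟨by omega, by rw [hC0]; exact hμ0⟩
    set t' := S.max' ⟨0, hS0⟩ with ht'
    have htS : t' ∈ S := Finset.max'_mem _ _
    have hCt' : C t' ≤ μ := (Finset.mem_filter.mp htS).2
    have ht'le : t' ≤ k := by
      have := (Finset.mem_filter.mp htS).1
      rw [Finset.mem_range] at this
      omega
    have ht'k : t' < k := by
      rcases Nat.lt_or_ge t' k with h | h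
      · exact h
      · exfalso
        have : t' = k := by omega
        rw [this] at hCt'
        linarith
    have hCt1 : μ < C (t' + 1) := by
      by_contra hcon
      push_neg at hcon
      have hmem : t' + 1 ∈ S := by
        rw [hS]
        simp only [Finset.mem_filter, Finset.mem_range]
        exact ⟨by omega, hcon⟩
      have := Finset.le_max' S (t' + 1) hmem
      rw [← ht'] at this
      omega
    set t : Fin k := ⟨t', ht'k⟩ with htdef
    have hdpt : (0:ℝ) < (d t : ℝ) * p t :=
      mul_pos (by exact_mod_cast hd t) (hp t).1
    set z := Nat.floor ((μ - C t') / ((d t : ℝ) * p t)) with hz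
    have hznn : (0:ℝ) ≤ (μ - C t') / ((d t : ℝ) * p t) :=
      div_nonneg (by linarith) (le_of_lt hdpt)
    have hzfl : (z : ℝ) ≤ (μ - C t') / ((d t : ℝ) * p t) := Nat.floor_le hznn
    have hzfu : (μ - C t') / ((d t : ℝ) * p t) < (z : ℝ) + 1 :=
      Nat.lt_floor_add_one _
    have hz1 : C t' + (d t : ℝ) * p t * (z : ℝ) ≤ μ := by
      have h1 : (z : ℝ) * ((d t : ℝ) * p t) ≤ μ - C t' := by
        rw [← le_div_iff₀ hdpt]
        exact hzfl
      linarith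
    have hz2 : μ < C t' + (d t : ℝ) * p t * ((z : ℝ) + 1) := by
      have h1 : μ - C t' < ((z : ℝ) + 1) * ((d t : ℝ) * p t) := by
        rw [← div_lt_iff₀ hdpt]
        exact hzfu
      linarith
    have hCstep : C (t' + 1) = C t' + (d t : ℝ) * p t * (N t : ℝ) := by
      rw [hstep t' ht'k]
      try rfl
    have hzN : z ≤ N t := by
      have h1 : (d t : ℝ) * p t * (z : ℝ) < (d t : ℝ) * p t * (N t : ℝ) := by
        rw [hCstep] at hCt1
        linarith
      have h2 : (z : ℝ) < (N t : ℝ) :=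
        lt_of_mul_lt_mul_left h1 (le_of_lt hdpt)
      have : z < N t := by exact_mod_cast h2
      omega
    set xI : Fin k → ℕ := fun j => if j < t then N j else if j = t then z else 0
      with hxI
    have hfeas : ∀ j, xI j ≤ N j := by
      intro j
      rw [hxI]
      by_cases h1 : j < t
      · simp [h1]
      · by_cases h2 : j = t
        · subst h2; simp [h1, hzN]
        · simp [h1, h2]
    have hIlt : ∀ j, j < t → xI j = N j := by
      intro j hj; rw [hxI]; simp [hj]
    have hIgt : ∀ j, t < j → xI j = 0 := by
      intro j hj
      rw [hxI]
      have h1 : ¬ (j < t) := by exact asymm hj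
      have h2 : j ≠ t := by exact ne_of_gt hj
      simp [h1, h2]
    refine ⟨xI, t, hfeas, hIlt, hIgt, ?_⟩
    -- mean of xI
    have hE : ∑ j, (d j : ℝ) * p j * (xI j : ℝ)
        = C t' + (d t : ℝ) * p t * (z : ℝ) := by
      rw [← Finset.sum_filter_add_sum_filter_not univ (fun j : Fin k => j < t)]
      have e1 : ∑ j ∈ univ.filter (fun j : Fin k => j < t),
          (d j : ℝ) * p j * (xI j : ℝ) = C t' := by
        rw [hC]
        have hff : univ.filter (fun j : Fin k => j < t)
            = univ.filter (fun j : Fin k => (j : ℕ) < t') := by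
          apply Finset.filter_congr
          intro j _
          simp [Fin.lt_def, htdef]
        rw [hff]
        apply Finset.sum_congr rfl
        intro j hj
        have hjt : (j : ℕ) < t' := (Finset.mem_filter.mp hj).2
        have hjlt : j < t := by rw [Fin.lt_def]; exact hjt
        rw [hIlt j hjlt, hw]
      have e2 : ∑ j ∈ univ.filter (fun j : Fin k => ¬ j < t),
          (d j : ℝ) * p j * (xI j : ℝ) = (d t : ℝ) * p t * (z : ℝ) := by
        have htmem : t ∈ univ.filter (fun j : Fin k => ¬ j < t) := by
          simp [lt_irrefl]
        rw [Finset.sum_eq_single_of_mem t htmem]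
        · have : xI t = z := by rw [hxI]; simp [lt_irrefl]
          rw [this]
        · intro j hj hjt
          have h1 : ¬ j < t := (Finset.mem_filter.mp hj).2
          have h2 : t < j := by
            rcases lt_trichotomy j t with h | h | h
            · exact absurd h h1
            · exact absurd h hjt
            · exact h
          rw [hIgt j h2]
          simp
      rw [e1, e2]
    rw [hE]
    have habs : |C t' + (d t : ℝ) * p t * (z : ℝ) - μ| ≤ (d t : ℝ) * p t := by
      rw [abs_le]
      constructor
      · linarith
      · linarith
    calc |C t' + (d t : ℝ) * p t * (z : ℝ) - μ| ≤ (d t : ℝ) * p t := habs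
      _ ≤ (d t : ℝ) * 1 := mul_le_mul_of_nonneg_left (le_of_lt (hp t).2)
          (Nat.cast_nonneg _)
      _ = (d t : ℝ) := mul_one _
      _ ≤ ∑ j, (d j : ℝ) := hdK t
end

end ILB

/-- **Theorem 1 (Ext): bounded loss of the clairvoyant index policy in the
multi-unit model.**  There is a constant `M1` depending only on `k`, `v`, `p`,
`d` (independent of `B` and `N`) with `OPT_d(N) − IND_d(N) ≤ M1` for all `B, N`. -/
theorem index_loss_bounded_multi {k : ℕ} (v p : Fin k → ℝ) (d : Fin k → ℕ)
    (hk : 1 ≤ k)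
    (hp : ∀ j, 0 < p j ∧ p j < 1)
    (hrat : ∀ j, ∃ q : ℚ, p j = (q : ℝ))
    (hd : ∀ j, 0 < d j)
    (hv : ∀ j, 0 < v j)
    (hq1 : ∀ j, v j < (d j : ℝ) * p j)
    (hord : ∀ i j : Fin k, i < j →
      v j / ((d j : ℝ) * p j) < v i / ((d i : ℝ) * p i))
    : ∃ M1 : ℝ, ∀ (B : ℕ) (N : Fin k → ℕ),
      OptValD v p d B (fun _ => 0) N - IndOptValD v p d B (fun _ => 0) N ≤ M1 := by
  classical
  have hp01 : ∀ j, 0 ≤ p j ∧ p j ≤ 1 := fun j => ⟨le_of_lt (hp j).1, le_of_lt (hp j).2⟩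
  set q : Fin k → ℝ := fun j => v j / ((d j : ℝ) * p j) with hq
  set pairs : Finset (Fin k × Fin k) :=
    (univ ×ˢ univ).filter (fun ij : Fin k × Fin k => ij.1 < ij.2) with hpairs
  set gset : Finset ℝ := insert 1 (pairs.image (fun ij => q ij.1 - q ij.2)) with hgset
  have hne : gset.Nonempty := ⟨1, mem_insert_self _ _⟩
  set g := gset.min' hne with hg
  have hg1 : g ≤ 1 := Finset.min'_le _ _ (mem_insert_self _ _)
  have hg0 : 0 < g := by
    have hmem := Finset.min'_mem gset hne
    rw [← hg] at hmem
    rw [hgset] at hmem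
    rcases Finset.mem_insert.mp hmem with h | h
    · rw [h]; norm_num
    · obtain ⟨ij, hij, hval⟩ := Finset.mem_image.mp h
      have hlt : ij.1 < ij.2 := by
        rw [hpairs] at hij
        exact (Finset.mem_filter.mp hij).2
      have := hord ij.1 ij.2 hlt
      rw [← hval]
      simp only [hq]
      linarith
  have hgap : ∀ i j : Fin k, i < j →
      g ≤ v i / ((d i : ℝ) * p i) - v j / ((d j : ℝ) * p j) := by
    intro i j hij
    have hmem : (q i - q j) ∈ gset := by
      rw [hgset]
      apply mem_insert_of_mem
      apply Finset.mem_image.mpr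
      refine ⟨(i, j), ?_, rfl⟩
      rw [hpairs]
      simp only [Finset.mem_filter, Finset.mem_product, mem_univ, true_and,
        and_true]
      exact hij
    have := Finset.min'_le gset _ hmem
    rw [← hg] at this
    simpa [hq] using this
  refine ⟨4 * (∑ j, (d j : ℝ)) + 2 * (∑ j, (d j : ℝ)) / g, ?_⟩
  intro B N
  have hub : ∀ x : Fin k → ℕ, Feasible N x →
      objFnD v p d B (fun _ => 0) x ≤ ∑ j, v j * (N j : ℝ) := by
    intro x hx
    rw [ILB.obj_zero]
    have hV : 0 ≤ VdB p d B x :=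
      ILB.jointExp_nonneg p x hp01 (fun a => le_max_right _ _)
    have hsum : ∑ j, v j * (x j : ℝ) ≤ ∑ j, v j * (N j : ℝ) := by
      apply Finset.sum_le_sum
      intro j _
      apply mul_le_mul_of_nonneg_left _ (le_of_lt (hv j))
      exact_mod_cast hx j
    linarith
  have hbddI : BddAbove {r : ℝ | ∃ x, Feasible N x ∧ IsIndexSol N x ∧
      r = objFnD v p d B (fun _ => 0) x} := by
    refine ⟨∑ j, v j * (N j : ℝ), ?_⟩
    rintro r ⟨x, hfe, _, rfl⟩
    exact hub x hfe
  have hx0 : Feasible N (fun _ => 0) := fun j => Nat.zero_le _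
  have hI0 : IsIndexSol N (fun _ => 0) := by
    refine ⟨⟨0, hk⟩, fun j hj => ?_, fun j hj => rfl⟩
    exfalso
    have : (j : ℕ) < 0 := hj
    omega
  have hOptNe : {r : ℝ | ∃ x, Feasible N x ∧
      r = objFnD v p d B (fun _ => 0) x}.Nonempty :=
    ⟨objFnD v p d B (fun _ => 0) (fun _ => 0), ⟨fun _ => 0, hx0, rfl⟩⟩
  have hkey : ∀ r ∈ {r : ℝ | ∃ x, Feasible N x ∧
      r = objFnD v p d B (fun _ => 0) x},
      r ≤ IndOptValD v p d B (fun _ => 0) N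
        + (4 * (∑ j, (d j : ℝ)) + 2 * (∑ j, (d j : ℝ)) / g) := by
    rintro r ⟨x, hfe, rfl⟩
    obtain ⟨xI, t, hfeI, hIlt, hIgt, heps⟩ :=
      ILB.exists_index_near p d hp hd hk N x hfe
    have hcore := ILB.core_ineq v p d B hp hd hv hq1 g hg0 hg1 hgap N x xI t
      hfe hIlt hIgt heps
    have hmem : objFnD v p d B (fun _ => 0) xI ∈ {r : ℝ | ∃ x, Feasible N x ∧
        IsIndexSol N x ∧ r = objFnD v p d B (fun _ => 0) x} :=
      ⟨xI, hfeI, ⟨t, hIlt, hIgt⟩, rfl⟩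
    have hle : objFnD v p d B (fun _ => 0) xI ≤ IndOptValD v p d B (fun _ => 0) N :=
      le_csSup hbddI hmem
    linarith
  have hOPT : OptValD v p d B (fun _ => 0) N ≤ IndOptValD v p d B (fun _ => 0) N
      + (4 * (∑ j, (d j : ℝ)) + 2 * (∑ j, (d j : ℝ)) / g) := by
    unfold OptValD
    exact csSup_le hOptNe hkey
  linarith
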